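/- Assume k = 4. Let γ_{ch} = σ(η) γ^0 γ^1 γ^2 γ^3 with σ(η) = (−i)^{(q−p)(q−p+1)/2}, and assume γ_{ch}² = 1_4. Let 𝖪_μ, 𝖠_μ ∈ M_m(ℂ), define 𝔡_μ = {𝖪_μ + 𝖠_μ, ·}_{e_μ} on M_m(ℂ), 𝔉_{μν} = [𝔡_μ, 𝔡_ν], θ = Σ_{μ,ν} η^{μν} 𝔡_μ ∘ 𝔡_ν, let Φ be any linear operator on M_m(ℂ), and set D_ω = Σ_μ γ^μ ⊗ 𝔡_μ + γ_{ch} ⊗ Φ on ℂ⁴ ⊗ M_m(ℂ). Then (1/4)·Tr(D_ω⁴) = −(1/2) Σ_{μ,ν} e_μ e_ν Tr( 𝔉_{μν} ∘ 𝔉_{μν} ) + Tr( (θ + Φ∘Φ) ∘ (θ + Φ∘Φ) ) − Σ_μ e_μ Tr( [𝔡_μ, Φ] ∘ [𝔡_μ, Φ] ), where the left-hand trace is over endomorphisms of ℂ⁴ ⊗ M_m(ℂ) and the right-hand traces are over endomorphisms of M_m(ℂ). (Paper: Lemma 6.5, trace of the fourth power of the fully fluctuated Dirac operator.) -/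
import Mathlib


open Matrix

noncomputable section

/-- The operator `g ⊗ T` on `ℂ^k ⊗ M_m(ℂ) ≅ (Fin k → M_m(ℂ))`. -/
def matOp {k : ℕ} {V : Type*} [AddCommGroup V] [Module ℂ V]
    (g : Matrix (Fin k) (Fin k) ℂ) (T : Module.End ℂ V) :
    Module.End ℂ (Fin k → V) where
  toFun f i := ∑ j, g i j • T (f j)
  map_add' f h := by
    funext i
    simp [map_add, smul_add, Finset.sum_add_distrib]
  map_smul' c f := by
    funext i
    simp only [Pi.smul_apply, _root_.map_smul, RingHom.id_apply]
    rw [Finset.smul_sum]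
    exact Finset.sum_congr rfl fun j _ => smul_comm _ _ _

/-- The generalized (anti-)commutator `{M, ·}_e : T ↦ M T + e T M`. -/
def brkt {m : ℕ} (M : Matrix (Fin m) (Fin m) ℂ) (e : ℂ) :
    Module.End ℂ (Matrix (Fin m) (Fin m) ℂ) :=
  LinearMap.mulLeft ℂ M + e • LinearMap.mulRight ℂ M


section helpers

variable {k : ℕ} {V : Type*} [AddCommGroup V] [Module ℂ V]

lemma matOp_apply (g : Matrix (Fin k) (Fin k) ℂ) (T : Module.End ℂ V) (f : Fin k → V) (i : Fin k) :
    matOp g T f i = ∑ j, g i j • T (f j) := rfl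

lemma matOp_mul (g g' : Matrix (Fin k) (Fin k) ℂ) (T T' : Module.End ℂ V) :
    matOp g T * matOp g' T' = matOp (g * g') (T * T') := by
  refine LinearMap.ext fun f => funext fun i => ?_
  show matOp g T (matOp g' T' f) i = _
  simp only [matOp_apply, map_sum, _root_.map_smul, Matrix.mul_apply, Module.End.mul_apply,
    Finset.sum_smul, Finset.smul_sum, smul_smul]
  rw [Finset.sum_comm]

lemma matOp_eq_sum (g : Matrix (Fin k) (Fin k) ℂ) (T : Module.End ℂ V) :
    matOp g T = ∑ i, ∑ j, g i j •
      ((LinearMap.single ℂ (fun _ : Fin k => V) i) ∘ₗ T ∘ₗ (LinearMap.proj j)) := by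
  refine LinearMap.ext fun f => funext fun i' => ?_
  simp only [matOp_apply, LinearMap.sum_apply, Finset.sum_apply, LinearMap.smul_apply,
    Pi.smul_apply, LinearMap.comp_apply, LinearMap.proj_apply, LinearMap.single_apply]
  rw [Finset.sum_comm]
  refine Finset.sum_congr rfl fun j _ => ?_
  rw [Finset.sum_eq_single i']
  · simp [Pi.single_apply]
  · intro b _ hb; simp [Pi.single_apply, hb]
  · intro h; simp at h

lemma matOp_trace [Module.Finite ℂ V] [Module.Free ℂ V]
    (g : Matrix (Fin k) (Fin k) ℂ) (T : Module.End ℂ V) :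
    LinearMap.trace ℂ (Fin k → V) (matOp g T) = g.trace * LinearMap.trace ℂ V T := by
  rw [matOp_eq_sum, map_sum]
  have : ∀ i j : Fin k, LinearMap.trace ℂ (Fin k → V)
      ((LinearMap.single ℂ (fun _ : Fin k => V) i) ∘ₗ T ∘ₗ (LinearMap.proj j))
      = if j = i then LinearMap.trace ℂ V T else 0 := by
    intro i j
    rw [LinearMap.trace_comp_comm']
    have hpc : (T ∘ₗ LinearMap.proj j) ∘ₗ (LinearMap.single ℂ (fun _ : Fin k => V) i)
        = if j = i then T else 0 := by
      ext x
      by_cases h : j = i <;> simp [h, Pi.single_apply, LinearMap.comp_apply]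
    rw [hpc]
    by_cases h : j = i <;> simp [h]
  simp only [map_sum, _root_.map_smul, this, Matrix.trace, Matrix.diag, smul_eq_mul,
    mul_ite, mul_zero]
  rw [Finset.sum_mul]
  refine Finset.sum_congr rfl fun i _ => ?_
  simp

end helpers

section cliffordTrace

variable {ι : Type*} [DecidableEq ι] {n : ℕ} (G : ι → Matrix (Fin n) (Fin n) ℂ) (ε : ι → ℂ)
variable (hrel : ∀ i j, G i * G j + G j * G i = (2 * if i = j then ε i else 0) • 1)

include hrel

lemma Gsq (i : ι) : G i * G i = ε i • 1 := by
  have h := hrel i i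
  simp only [if_pos rfl, eq_self_iff_true, if_true] at h
  have h2 : (2:ℂ) • (G i * G i) = (2:ℂ) • (ε i • 1) := by
    rw [two_smul]
    rw [h, mul_smul]
    try simp
  exact smul_right_injective _ (by norm_num) h2

lemma Ganti {i j : ι} (h : i ≠ j) : G i * G j = -(G j * G i) := by
  have hr := hrel i j
  rw [if_neg h] at hr
  simp only [mul_zero, zero_smul] at hr
  linear_combination (norm := abel) hr

lemma Gtr2 (htr1 : (1 : Matrix (Fin n) (Fin n) ℂ).trace = (n : ℂ)) (i j : ι) :
    (G i * G j).trace = (if i = j then ε i else 0) * n := by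
  by_cases h : i = j
  · subst h
    rw [Gsq G ε hrel, if_pos rfl, Matrix.trace_smul, htr1, smul_eq_mul]
  · rw [if_neg h, zero_mul]
    have h1 : (G i * G j).trace = (G j * G i).trace := Matrix.trace_mul_comm _ _
    have h2 : (G j * G i).trace = -(G i * G j).trace := by
      rw [Ganti G ε hrel (Ne.symm h), Matrix.trace_neg]
    have h3 : (G i * G j).trace + (G i * G j).trace = 0 := by
      nth_rewrite 2 [h1]; rw [h2]; ring
    exact add_self_eq_zero.mp h3

lemma Gtr4 (htr1 : (1 : Matrix (Fin n) (Fin n) ℂ).trace = (n : ℂ)) (a b c d : ι) :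
    (G a * G b * G c * G d).trace =
      ((if a = b then ε a else 0) * (if c = d then ε c else 0)
        - (if a = c then ε a else 0) * (if b = d then ε b else 0)
        + (if a = d then ε a else 0) * (if b = c then ε b else 0)) * n := by
  have sq := Gsq G ε hrel
  have anti := fun {i j} h => Ganti G ε hrel (i := i) (j := j) h
  have tr2 := Gtr2 G ε hrel htr1
  by_cases hab : a = b
  · subst hab
    have hL : G a * G a * G c * G d = ε a • (G c * G d) := by
      rw [sq]; simp [Matrix.smul_mul]
    rw [hL, Matrix.trace_smul, smul_eq_mul, tr2 c d]
    simp only [if_pos rfl, eq_self_iff_true, if_true]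
    ring
  · by_cases hcd : c = d
    · subst hcd
      have hL : G a * G b * G c * G c = ε c • (G a * G b) := by
        rw [mul_assoc, sq]; simp [Matrix.mul_smul]
      rw [hL, Matrix.trace_smul, smul_eq_mul, tr2 a b]
      simp only [if_neg hab, if_pos rfl, eq_self_iff_true, if_true]
      ring
    · by_cases hbc : b = c
      · subst hbc
        have hL : G a * G b * G b * G d = ε b • (G a * G d) := by
          rw [mul_assoc (G a), sq]; simp [Matrix.mul_smul, Matrix.smul_mul]
        rw [hL, Matrix.trace_smul, smul_eq_mul, tr2 a d]
        simp only [if_neg hab, if_neg hcd, if_pos rfl, eq_self_iff_true, if_true]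
        ring
      · by_cases hac : a = c
        · subst hac
          have hL : G a * G b * G a * G d = -(ε a • (G b * G d)) := by
            rw [mul_assoc (G a), anti (Ne.symm hab), mul_neg, ← mul_assoc, sq]
            simp [Matrix.smul_mul]
          rw [hL, Matrix.trace_neg, Matrix.trace_smul, smul_eq_mul, tr2 b d]
          simp only [if_neg hab, if_neg hcd, if_neg hbc, if_pos rfl, eq_self_iff_true, if_true]
          ring
        · by_cases had : a = d
          · subst had
            have h1 : (G a * G b * G c * G a).trace = (G a * (G a * G b * G c)).trace :=
              Matrix.trace_mul_comm _ _
            have hL : G a * (G a * G b * G c) = ε a • (G b * G c) := by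
              rw [← mul_assoc, ← mul_assoc, sq]; simp [Matrix.smul_mul]
            rw [h1, hL, Matrix.trace_smul, smul_eq_mul, tr2 b c]
            simp only [if_neg hab, if_neg hac, if_neg hbc, if_pos rfl, eq_self_iff_true, if_true]
            ring
          · by_cases hbd : b = d
            · subst hbd
              have hL : G a * G b * G c * G b = -(ε b • (G a * G c)) := by
                rw [mul_assoc (G a * G b), anti (fun h => hbc h.symm), mul_neg,
                  ← mul_assoc, mul_assoc (G a), sq]
                simp [Matrix.mul_smul, Matrix.smul_mul]
              rw [hL, Matrix.trace_neg, Matrix.trace_smul, smul_eq_mul, tr2 a c]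
              simp only [if_neg hab, if_neg hac, if_neg hbc, if_pos rfl, eq_self_iff_true, if_true]
              ring
            · have h1 : (G a * G b * G c * G d).trace = (G d * (G a * G b * G c)).trace :=
                Matrix.trace_mul_comm _ _
              have hL : G d * (G a * G b * G c) = -(G a * G b * G c * G d) := by
                calc G d * (G a * G b * G c) = ((G d * G a) * G b) * G c := by
                      noncomm_ring
                  _ = ((-(G a * G d)) * G b) * G c := by rw [anti (fun h => had h.symm)]
                  _ = -((G a * (G d * G b)) * G c) := by noncomm_ring
                  _ = -((G a * (-(G b * G d))) * G c) := by rw [anti (fun h => hbd h.symm)]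
                  _ = (G a * G b) * (G d * G c) := by noncomm_ring
                  _ = (G a * G b) * (-(G c * G d)) := by rw [anti (fun h => hcd h.symm)]
                  _ = -(G a * G b * G c * G d) := by noncomm_ring
              have h2 : (G a * G b * G c * G d).trace + (G a * G b * G c * G d).trace = 0 := by
                nth_rewrite 2 [h1]; rw [hL, Matrix.trace_neg]; ring
              rw [add_self_eq_zero.mp h2]
              simp only [if_neg hab, if_neg hac, if_neg had, if_neg hbc, if_neg hbd, if_neg hcd]
              ring

end cliffordTrace

section collapseSec

variable (ε : Fin 5 → ℂ) (t : Fin 5 → Fin 5 → Fin 5 → Fin 5 → ℂ)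

lemma collapse1 :
    (∑ a, ∑ b, ∑ c, ∑ d, ((if a = b then ε a else 0) * (if c = d then ε c else 0)) * t a b c d)
      = ∑ a, ∑ b, ε a * ε b * t a a b b := by
  refine Finset.sum_congr rfl fun a _ => ?_
  rw [Finset.sum_eq_single a]
  · refine Finset.sum_congr rfl fun c _ => ?_
    rw [Finset.sum_eq_single c]
    · simp
    · intro d _ hd; simp [Ne.symm hd]
    · simp
  · intro b _ hb; simp [Ne.symm hb]
  · simp

lemma collapse2 :
    (∑ a, ∑ b, ∑ c, ∑ d, ((if a = c then ε a else 0) * (if b = d then ε b else 0)) * t a b c d)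
      = ∑ a, ∑ b, ε a * ε b * t a b a b := by
  refine Finset.sum_congr rfl fun a _ => ?_
  refine Finset.sum_congr rfl fun b _ => ?_
  rw [Finset.sum_eq_single a]
  · rw [Finset.sum_eq_single b]
    · simp
    · intro d _ hd; simp [Ne.symm hd]
    · simp
  · intro c _ hc; simp [Ne.symm hc]
  · simp

lemma collapse3 :
    (∑ a, ∑ b, ∑ c, ∑ d, ((if a = d then ε a else 0) * (if b = c then ε b else 0)) * t a b c d)
      = ∑ a, ∑ b, ε a * ε b * t a b b a := by
  refine Finset.sum_congr rfl fun a _ => ?_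
  refine Finset.sum_congr rfl fun b _ => ?_
  rw [Finset.sum_eq_single b]
  · rw [Finset.sum_eq_single a]
    · simp [mul_comm]
    · intro d _ hd; simp [Ne.symm hd]
    · simp
  · intro c _ hc; simp [Ne.symm hc]
  · simp

lemma collapse :
    (∑ a, ∑ b, ∑ c, ∑ d,
      ((if a = b then ε a else 0) * (if c = d then ε c else 0)
        - (if a = c then ε a else 0) * (if b = d then ε b else 0)
        + (if a = d then ε a else 0) * (if b = c then ε b else 0)) * t a b c d)
      = (∑ a, ∑ b, ε a * ε b * t a a b b) - (∑ a, ∑ b, ε a * ε b * t a b a b)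
        + (∑ a, ∑ b, ε a * ε b * t a b b a) := by
  have h : ∀ a b c d : Fin 5,
      ((if a = b then ε a else 0) * (if c = d then ε c else 0)
        - (if a = c then ε a else 0) * (if b = d then ε b else 0)
        + (if a = d then ε a else 0) * (if b = c then ε b else 0)) * t a b c d
      = ((if a = b then ε a else 0) * (if c = d then ε c else 0)) * t a b c d
        - ((if a = c then ε a else 0) * (if b = d then ε b else 0)) * t a b c d
        + ((if a = d then ε a else 0) * (if b = c then ε b else 0)) * t a b c d := by
    intros; ring
  simp only [h, Finset.sum_add_distrib, Finset.sum_sub_distrib]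
  rw [collapse1, collapse2, collapse3]

end collapseSec

lemma sum4_rev {M : Type*} [AddCommMonoid M] (h : Fin 5 → Fin 5 → Fin 5 → Fin 5 → M) :
    (∑ a, ∑ b, ∑ c, ∑ d, h d c b a) = ∑ a, ∑ b, ∑ c, ∑ d, h a b c d := by
  calc (∑ a, ∑ b, ∑ c, ∑ d, h d c b a)
      = ∑ a, ∑ b, ∑ d, ∑ c, h d c b a :=
        Finset.sum_congr rfl fun a _ => Finset.sum_congr rfl fun b _ => Finset.sum_comm
    _ = ∑ a, ∑ d, ∑ b, ∑ c, h d c b a :=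
        Finset.sum_congr rfl fun a _ => Finset.sum_comm
    _ = ∑ d, ∑ a, ∑ b, ∑ c, h d c b a := Finset.sum_comm
    _ = ∑ d, ∑ a, ∑ c, ∑ b, h d c b a :=
        Finset.sum_congr rfl fun a _ => Finset.sum_congr rfl fun b _ => Finset.sum_comm
    _ = ∑ d, ∑ c, ∑ a, ∑ b, h d c b a :=
        Finset.sum_congr rfl fun a _ => Finset.sum_comm
    _ = ∑ d, ∑ c, ∑ b, ∑ a, h d c b a :=
        Finset.sum_congr rfl fun a _ => Finset.sum_congr rfl fun b _ => Finset.sum_comm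

lemma master {m : ℕ} (G : Fin 5 → Matrix (Fin 4) (Fin 4) ℂ) (ε : Fin 5 → ℂ)
    (hrel : ∀ i j, G i * G j + G j * G i = (2 * if i = j then ε i else 0) • 1)
    (T : Fin 5 → Module.End ℂ (Matrix (Fin m) (Fin m) ℂ)) :
    LinearMap.trace ℂ (Fin 4 → Matrix (Fin m) (Fin m) ℂ) ((∑ i, matOp (G i) (T i)) ^ 4) =
      4 * ((∑ a, ∑ b, ε a * ε b *
              LinearMap.trace ℂ _ (T a * T a * T b * T b))
        - (∑ a, ∑ b, ε a * ε b *
              LinearMap.trace ℂ _ (T a * T b * T a * T b))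
        + (∑ a, ∑ b, ε a * ε b *
              LinearMap.trace ℂ _ (T a * T b * T b * T a))) := by
  have htr1 : (1 : Matrix (Fin 4) (Fin 4) ℂ).trace = ((4 : ℕ) : ℂ) := by
    simp [Matrix.trace_one]
  have hp : (∑ i, matOp (G i) (T i)) ^ 4
      = ∑ a, ∑ b, ∑ c, ∑ d, matOp (G a * G b * G c * G d) (T a * T b * T c * T d) := by
    rw [pow_succ, pow_succ, pow_succ, pow_one]
    simp only [Finset.sum_mul, Finset.mul_sum, matOp_mul]
    exact sum4_rev (fun a b c d => matOp (G a * G b * G c * G d) (T a * T b * T c * T d))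
  rw [hp]
  simp only [map_sum, matOp_trace, Gtr4 G ε hrel htr1]
  have hco : ∀ a b c d : Fin 5,
      (((if a = b then ε a else 0) * (if c = d then ε c else 0)
        - (if a = c then ε a else 0) * (if b = d then ε b else 0)
        + (if a = d then ε a else 0) * (if b = c then ε b else 0)) * ((4:ℕ):ℂ))
        * LinearMap.trace ℂ _ (T a * T b * T c * T d)
      = ((if a = b then ε a else 0) * (if c = d then ε c else 0)
        - (if a = c then ε a else 0) * (if b = d then ε b else 0)
        + (if a = d then ε a else 0) * (if b = c then ε b else 0))
        * ((4:ℂ) * LinearMap.trace ℂ _ (T a * T b * T c * T d)) := by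
    intros; push_cast; ring
  refine Eq.trans (Finset.sum_congr rfl fun a _ => Finset.sum_congr rfl fun b _ =>
    Finset.sum_congr rfl fun c _ => Finset.sum_congr rfl fun d _ => hco a b c d) ?_
  rw [collapse ε (fun a b c d => (4:ℂ) * LinearMap.trace ℂ _ (T a * T b * T c * T d))]
  have pull : ∀ f : Fin 5 → Fin 5 → ℂ,
      (∑ a, ∑ b, ε a * ε b * (4 * f a b)) = 4 * ∑ a, ∑ b, ε a * ε b * f a b := by
    intro f
    rw [Finset.mul_sum]
    refine Finset.sum_congr rfl fun a _ => ?_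
    rw [Finset.mul_sum]
    exact Finset.sum_congr rfl fun b _ => by ring
  rw [pull (fun a b => LinearMap.trace ℂ _ (T a * T a * T b * T b)),
    pull (fun a b => LinearMap.trace ℂ _ (T a * T b * T a * T b)),
    pull (fun a b => LinearMap.trace ℂ _ (T a * T b * T b * T a))]
  ring

lemma chAnti (γ : Fin 4 → Matrix (Fin 4) (Fin 4) ℂ)
    (anti : ∀ i j : Fin 4, i ≠ j → γ i * γ j = -(γ j * γ i)) (μ : Fin 4) :
    γ μ * (γ 0 * γ 1 * γ 2 * γ 3) = -((γ 0 * γ 1 * γ 2 * γ 3) * γ μ) := by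
  have swap : ∀ (i j : Fin 4), i ≠ j → ∀ X : Matrix (Fin 4) (Fin 4) ℂ,
      γ i * (γ j * X) = -(γ j * (γ i * X)) := by
    intro i j h X
    rw [← mul_assoc, anti i j h, neg_mul, mul_assoc]
  rw [eq_neg_iff_add_eq_zero]
  simp only [mul_assoc]
  have h4 : μ = 0 ∨ μ = 1 ∨ μ = 2 ∨ μ = 3 := by revert μ; decide
  rcases h4 with h | h | h | h <;> subst h
  · simp only [anti 3 0 (by decide), swap 2 0 (by decide) , swap 1 0 (by decide),
      mul_neg, neg_mul, neg_neg, Fin.isValue]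
    exact add_neg_cancel _
  · simp only [swap 1 0 (by decide), anti 3 1 (by decide), swap 2 1 (by decide),
      mul_neg, neg_mul, neg_neg, Fin.isValue]
    exact neg_add_cancel _
  · simp only [swap 2 0 (by decide), swap 2 1 (by decide), anti 3 2 (by decide),
      mul_neg, neg_mul, neg_neg, Fin.isValue]
    exact add_neg_cancel _
  · simp only [swap 3 0 (by decide), swap 3 1 (by decide), swap 3 2 (by decide),
      mul_neg, neg_mul, neg_neg, Fin.isValue]
    exact neg_add_cancel _

section traceEnd

variable {m : ℕ}

local notation "τ" => LinearMap.trace ℂ (Matrix (Fin m) (Fin m) ℂ)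

lemma trace_comm_sq (P Q : Module.End ℂ (Matrix (Fin m) (Fin m) ℂ)) :
    τ ((P * Q - Q * P) * (P * Q - Q * P))
      = 2 * τ (P * Q * P * Q) - 2 * τ (P * P * Q * Q) := by
  have expand : (P * Q - Q * P) * (P * Q - Q * P)
      = P * Q * P * Q - P * Q * (Q * P) - Q * P * (P * Q) + Q * P * (Q * P) := by
    rw [sub_mul, mul_sub, mul_sub]
    rw [show P * Q * P * Q = P * Q * (P * Q) from mul_assoc _ _ _]
    abel
  rw [expand, map_add, map_sub, map_sub]
  have e1 : τ (P * Q * (Q * P)) = τ (P * P * Q * Q) := by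
    calc τ (P * Q * (Q * P)) = τ ((P * Q * Q) * P) := congrArg _ (by noncomm_ring)
      _ = τ (P * (P * Q * Q)) := LinearMap.trace_mul_comm ℂ _ _
      _ = τ (P * P * Q * Q) := congrArg _ (by noncomm_ring)
  have e2 : τ (Q * P * (P * Q)) = τ (P * P * Q * Q) := by
    calc τ (Q * P * (P * Q)) = τ ((Q * P * P) * Q) := congrArg _ (by noncomm_ring)
      _ = τ (Q * (Q * P * P)) := LinearMap.trace_mul_comm ℂ _ _
      _ = τ ((Q * Q) * (P * P)) := congrArg _ (by noncomm_ring)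
      _ = τ ((P * P) * (Q * Q)) := LinearMap.trace_mul_comm ℂ _ _
      _ = τ (P * P * Q * Q) := congrArg _ (by noncomm_ring)
  have e3 : τ (Q * P * (Q * P)) = τ (P * Q * P * Q) := by
    calc τ (Q * P * (Q * P)) = τ ((Q * P * Q) * P) := congrArg _ (by noncomm_ring)
      _ = τ (P * (Q * P * Q)) := LinearMap.trace_mul_comm ℂ _ _
      _ = τ (P * Q * P * Q) := congrArg _ (by noncomm_ring)
  rw [e1, e2, e3]
  ring

lemma trace_sq_comm (P Q : Module.End ℂ (Matrix (Fin m) (Fin m) ℂ)) :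
    τ (P * P * Q * Q) = τ (Q * Q * P * P) := by
  calc τ (P * P * Q * Q) = τ ((P * P) * (Q * Q)) := congrArg _ (by noncomm_ring)
    _ = τ ((Q * Q) * (P * P)) := LinearMap.trace_mul_comm ℂ _ _
    _ = τ (Q * Q * P * P) := congrArg _ (by noncomm_ring)

lemma trace_alt_comm (P Q : Module.End ℂ (Matrix (Fin m) (Fin m) ℂ)) :
    τ (P * Q * P * Q) = τ (Q * P * Q * P) := by
  calc τ (P * Q * P * Q) = τ ((P * Q * P) * Q) := rfl
    _ = τ (Q * (P * Q * P)) := LinearMap.trace_mul_comm ℂ _ _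
    _ = τ (Q * P * Q * P) := congrArg _ (by noncomm_ring)

lemma trace_cyc2 (P Q : Module.End ℂ (Matrix (Fin m) (Fin m) ℂ)) :
    τ (P * Q * Q * P) = τ (P * P * Q * Q) := by
  calc τ (P * Q * Q * P) = τ (P * (P * Q * Q)) := LinearMap.trace_mul_comm ℂ _ _
    _ = τ (P * P * Q * Q) := congrArg _ (by noncomm_ring)

end traceEnd

theorem stmt18 (p q m : ℕ) (hpq : p + q = 4) (hm : 1 ≤ m)
    (e : Fin 4 → ℂ) (he : ∀ μ, e μ = if (μ : ℕ) < p then 1 else -1)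
    (γ : Fin 4 → Matrix (Fin 4) (Fin 4) ℂ)
    (hCl : ∀ μ ν, γ μ * γ ν + γ ν * γ μ =
      (2 * if μ = ν then e μ else 0) • (1 : Matrix (Fin 4) (Fin 4) ℂ))
    (hAdj : ∀ μ, (γ μ)ᴴ = e μ • γ μ)
    (γch : Matrix (Fin 4) (Fin 4) ℂ)
    (hγch : γch =
      ((-Complex.I) ^ ((((q : ℤ) - (p : ℤ)) * ((q : ℤ) - (p : ℤ) + 1)) / 2)) •
        (γ 0 * γ 1 * γ 2 * γ 3))
    (hγch2 : γch * γch = 1)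
    (K A : Fin 4 → Matrix (Fin m) (Fin m) ℂ)
    (dop : Fin 4 → Module.End ℂ (Matrix (Fin m) (Fin m) ℂ))
    (hdop : ∀ μ, dop μ = brkt (K μ + A μ) (e μ))
    (F : Fin 4 → Fin 4 → Module.End ℂ (Matrix (Fin m) (Fin m) ℂ))
    (hF : ∀ μ ν, F μ ν = dop μ * dop ν - dop ν * dop μ)
    (θ : Module.End ℂ (Matrix (Fin m) (Fin m) ℂ))
    (hθ : θ = ∑ μ, ∑ ν, (if μ = ν then e μ else 0) • (dop μ * dop ν))
    (Φ : Module.End ℂ (Matrix (Fin m) (Fin m) ℂ))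
    (Dω : Module.End ℂ (Fin 4 → Matrix (Fin m) (Fin m) ℂ))
    (hDω : Dω = (∑ μ, matOp (γ μ) (dop μ)) + matOp γch Φ) :
    (1 / 4 : ℂ) * LinearMap.trace ℂ (Fin 4 → Matrix (Fin m) (Fin m) ℂ) (Dω ^ 4) =
      -(1 / 2 : ℂ) * (∑ μ, ∑ ν, e μ * e ν *
          LinearMap.trace ℂ (Matrix (Fin m) (Fin m) ℂ) (F μ ν * F μ ν))
        + LinearMap.trace ℂ (Matrix (Fin m) (Fin m) ℂ) ((θ + Φ * Φ) * (θ + Φ * Φ))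
        - ∑ μ, e μ * LinearMap.trace ℂ (Matrix (Fin m) (Fin m) ℂ)
            ((dop μ * Φ - Φ * dop μ) * (dop μ * Φ - Φ * dop μ)) := by
  classical
  -- abbreviations
  set Γ' : Fin 5 → Matrix (Fin 4) (Fin 4) ℂ := Fin.snoc γ γch with hΓ'
  set ε' : Fin 5 → ℂ := Fin.snoc e 1 with hε'
  set T' : Fin 5 → Module.End ℂ (Matrix (Fin m) (Fin m) ℂ) := Fin.snoc dop Φ with hT'
  have anti : ∀ i j : Fin 4, i ≠ j → γ i * γ j = -(γ j * γ i) := fun i j h =>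
    Ganti γ e hCl h
  have hPanti : ∀ μ : Fin 4, γ μ * γch + γch * γ μ = 0 := by
    intro μ
    rw [hγch, Matrix.mul_smul, Matrix.smul_mul, chAnti γ anti μ, smul_neg]
    exact neg_add_cancel _
  have hrel' : ∀ i j : Fin 5, Γ' i * Γ' j + Γ' j * Γ' i =
      (2 * if i = j then ε' i else 0) • (1 : Matrix (Fin 4) (Fin 4) ℂ) := by
    intro i j
    induction i using Fin.lastCases with
    | last =>
      induction j using Fin.lastCases with
      | last =>
        simp only [hΓ', hε', Fin.snoc_last, if_pos rfl]
        rw [hγch2]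
        simp [two_smul]
      | cast ν =>
        have hne : (Fin.last 4) ≠ ν.castSucc := (Fin.castSucc_lt_last ν).ne'
        simp only [hΓ', hε', Fin.snoc_last, Fin.snoc_castSucc, if_neg hne, mul_zero, zero_smul]
        rw [add_comm]
        exact hPanti ν
    | cast μ =>
      induction j using Fin.lastCases with
      | last =>
        have hne : μ.castSucc ≠ (Fin.last 4) := (Fin.castSucc_lt_last μ).ne
        simp only [hΓ', hε', Fin.snoc_last, Fin.snoc_castSucc, if_neg hne, mul_zero, zero_smul]
        exact hPanti μ
      | cast ν =>
        simp only [hΓ', hε', Fin.snoc_castSucc, Fin.castSucc_inj]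
        exact hCl μ ν
  -- the five-term Dirac operator
  have hD5 : Dω = ∑ i : Fin 5, matOp (Γ' i) (T' i) := by
    rw [hDω, Fin.sum_univ_castSucc (f := fun i : Fin 5 => matOp (Γ' i) (T' i))]
    simp only [hΓ', hT', Fin.snoc_castSucc, Fin.snoc_last]
  have hmaster := master Γ' ε' hrel' T'
  rw [← hD5] at hmaster
  -- snoc evaluation facts
  have hTc : ∀ μ : Fin 4, T' μ.castSucc = dop μ := fun μ => by
    simp only [hT', Fin.snoc_castSucc]
  have hTl : T' (Fin.last 4) = Φ := by simp only [hT', Fin.snoc_last]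
  have hec : ∀ μ : Fin 4, ε' μ.castSucc = e μ := fun μ => by
    simp only [hε', Fin.snoc_castSucc]
  have hel : ε' (Fin.last 4) = 1 := by simp only [hε', Fin.snoc_last]
  -- splitting of double sums over Fin 5
  have hsplit : ∀ (Fn : Fin 5 → Fin 5 → ℂ), (∑ a, ∑ b, Fn a b)
      = (∑ μ : Fin 4, ∑ ν : Fin 4, Fn μ.castSucc ν.castSucc)
        + (∑ μ : Fin 4, Fn μ.castSucc (Fin.last 4))
        + (∑ ν : Fin 4, Fn (Fin.last 4) ν.castSucc)
        + Fn (Fin.last 4) (Fin.last 4) := by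
    intro Fn
    rw [Fin.sum_univ_castSucc (f := fun a => ∑ b, Fn a b)]
    rw [Fin.sum_univ_castSucc (f := fun b => Fn (Fin.last 4) b)]
    rw [show (∑ μ : Fin 4, ∑ b : Fin 5, Fn μ.castSucc b)
        = ∑ μ : Fin 4, ((∑ ν : Fin 4, Fn μ.castSucc ν.castSucc) + Fn μ.castSucc (Fin.last 4))
      from Finset.sum_congr rfl fun μ _ => Fin.sum_univ_castSucc _]
    rw [Finset.sum_add_distrib]
    ring
  -- the three Fin-5 double sums
  have hS : (∑ a, ∑ b, ε' a * ε' b * LinearMap.trace ℂ (Matrix (Fin m) (Fin m) ℂ) (T' a * T' a * T' b * T' b))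
      = (∑ μ, ∑ ν, e μ * e ν * LinearMap.trace ℂ (Matrix (Fin m) (Fin m) ℂ) (dop μ * dop μ * (dop ν * dop ν)))
        + 2 * (∑ μ, e μ * LinearMap.trace ℂ (Matrix (Fin m) (Fin m) ℂ) (dop μ * dop μ * Φ * Φ)) + LinearMap.trace ℂ (Matrix (Fin m) (Fin m) ℂ) (Φ * Φ * Φ * Φ) := by
    rw [hsplit (fun a b => ε' a * ε' b * LinearMap.trace ℂ (Matrix (Fin m) (Fin m) ℂ) (T' a * T' a * T' b * T' b))]
    simp only [hTc, hTl, hec, hel, one_mul, mul_one]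
    have h3 : (∑ ν : Fin 4, e ν * LinearMap.trace ℂ (Matrix (Fin m) (Fin m) ℂ) (Φ * Φ * dop ν * dop ν))
        = ∑ μ : Fin 4, e μ * LinearMap.trace ℂ (Matrix (Fin m) (Fin m) ℂ) (dop μ * dop μ * Φ * Φ) := by
      refine Finset.sum_congr rfl fun ν _ => ?_
      rw [trace_sq_comm]
    rw [h3]
    have h1 : (∑ μ : Fin 4, ∑ ν : Fin 4, e μ * e ν * LinearMap.trace ℂ (Matrix (Fin m) (Fin m) ℂ) (dop μ * dop μ * dop ν * dop ν))
        = ∑ μ, ∑ ν, e μ * e ν * LinearMap.trace ℂ (Matrix (Fin m) (Fin m) ℂ) (dop μ * dop μ * (dop ν * dop ν)) := by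
      rfl
    rw [h1]
    ring
  have hW : (∑ a, ∑ b, ε' a * ε' b * LinearMap.trace ℂ (Matrix (Fin m) (Fin m) ℂ) (T' a * T' b * T' a * T' b))
      = (∑ μ, ∑ ν, e μ * e ν * LinearMap.trace ℂ (Matrix (Fin m) (Fin m) ℂ) (dop μ * dop ν * dop μ * dop ν))
        + 2 * (∑ μ, e μ * LinearMap.trace ℂ (Matrix (Fin m) (Fin m) ℂ) (dop μ * Φ * dop μ * Φ)) + LinearMap.trace ℂ (Matrix (Fin m) (Fin m) ℂ) (Φ * Φ * Φ * Φ) := by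
    rw [hsplit (fun a b => ε' a * ε' b * LinearMap.trace ℂ (Matrix (Fin m) (Fin m) ℂ) (T' a * T' b * T' a * T' b))]
    simp only [hTc, hTl, hec, hel, one_mul, mul_one]
    have h3 : (∑ ν : Fin 4, e ν * LinearMap.trace ℂ (Matrix (Fin m) (Fin m) ℂ) (Φ * dop ν * Φ * dop ν))
        = ∑ μ : Fin 4, e μ * LinearMap.trace ℂ (Matrix (Fin m) (Fin m) ℂ) (dop μ * Φ * dop μ * Φ) := by
      refine Finset.sum_congr rfl fun ν _ => ?_
      rw [trace_alt_comm]
    rw [h3]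
    ring
  have hS2 : (∑ a, ∑ b, ε' a * ε' b * LinearMap.trace ℂ (Matrix (Fin m) (Fin m) ℂ) (T' a * T' b * T' b * T' a))
      = ∑ a, ∑ b, ε' a * ε' b * LinearMap.trace ℂ (Matrix (Fin m) (Fin m) ℂ) (T' a * T' a * T' b * T' b) := by
    refine Finset.sum_congr rfl fun a _ => Finset.sum_congr rfl fun b _ => ?_
    rw [trace_cyc2]
  -- RHS term 1 : field strength
  have hRF : (∑ μ, ∑ ν, e μ * e ν * LinearMap.trace ℂ (Matrix (Fin m) (Fin m) ℂ) (F μ ν * F μ ν))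
      = 2 * (∑ μ, ∑ ν, e μ * e ν * LinearMap.trace ℂ (Matrix (Fin m) (Fin m) ℂ) (dop μ * dop ν * dop μ * dop ν))
        - 2 * (∑ μ, ∑ ν, e μ * e ν * LinearMap.trace ℂ (Matrix (Fin m) (Fin m) ℂ) (dop μ * dop μ * (dop ν * dop ν))) := by
    have hterm : ∀ μ ν : Fin 4, e μ * e ν * LinearMap.trace ℂ (Matrix (Fin m) (Fin m) ℂ) (F μ ν * F μ ν)
        = 2 * (e μ * e ν * LinearMap.trace ℂ (Matrix (Fin m) (Fin m) ℂ) (dop μ * dop ν * dop μ * dop ν))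
          - 2 * (e μ * e ν * LinearMap.trace ℂ (Matrix (Fin m) (Fin m) ℂ) (dop μ * dop μ * (dop ν * dop ν))) := by
      intro μ ν
      rw [hF, trace_comm_sq]
      rw [show LinearMap.trace ℂ (Matrix (Fin m) (Fin m) ℂ) (dop μ * dop μ * (dop ν * dop ν))
        = LinearMap.trace ℂ (Matrix (Fin m) (Fin m) ℂ) (dop μ * dop μ * dop ν * dop ν) from rfl]
      ring
    calc (∑ μ, ∑ ν, e μ * e ν * LinearMap.trace ℂ (Matrix (Fin m) (Fin m) ℂ) (F μ ν * F μ ν))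
        = ∑ μ, ∑ ν, (2 * (e μ * e ν * LinearMap.trace ℂ (Matrix (Fin m) (Fin m) ℂ) (dop μ * dop ν * dop μ * dop ν))
            - 2 * (e μ * e ν * LinearMap.trace ℂ (Matrix (Fin m) (Fin m) ℂ) (dop μ * dop μ * (dop ν * dop ν)))) :=
          Finset.sum_congr rfl fun μ _ => Finset.sum_congr rfl fun ν _ => hterm μ ν
      _ = _ := by
          simp only [Finset.sum_sub_distrib, Finset.mul_sum]
  -- RHS term 3 : covariant derivative of Φ
  have hRC : (∑ μ, e μ * LinearMap.trace ℂ (Matrix (Fin m) (Fin m) ℂ) ((dop μ * Φ - Φ * dop μ) * (dop μ * Φ - Φ * dop μ)))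
      = 2 * (∑ μ, e μ * LinearMap.trace ℂ (Matrix (Fin m) (Fin m) ℂ) (dop μ * Φ * dop μ * Φ))
        - 2 * (∑ μ, e μ * LinearMap.trace ℂ (Matrix (Fin m) (Fin m) ℂ) (dop μ * dop μ * Φ * Φ)) := by
    have hterm : ∀ μ : Fin 4, e μ * LinearMap.trace ℂ (Matrix (Fin m) (Fin m) ℂ) ((dop μ * Φ - Φ * dop μ) * (dop μ * Φ - Φ * dop μ))
        = 2 * (e μ * LinearMap.trace ℂ (Matrix (Fin m) (Fin m) ℂ) (dop μ * Φ * dop μ * Φ)) - 2 * (e μ * LinearMap.trace ℂ (Matrix (Fin m) (Fin m) ℂ) (dop μ * dop μ * Φ * Φ)) := by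
      intro μ
      rw [trace_comm_sq]
      ring
    calc (∑ μ, e μ * LinearMap.trace ℂ (Matrix (Fin m) (Fin m) ℂ) ((dop μ * Φ - Φ * dop μ) * (dop μ * Φ - Φ * dop μ)))
        = ∑ μ, (2 * (e μ * LinearMap.trace ℂ (Matrix (Fin m) (Fin m) ℂ) (dop μ * Φ * dop μ * Φ))
            - 2 * (e μ * LinearMap.trace ℂ (Matrix (Fin m) (Fin m) ℂ) (dop μ * dop μ * Φ * Φ))) :=
          Finset.sum_congr rfl fun μ _ => hterm μ
      _ = _ := by simp only [Finset.sum_sub_distrib, Finset.mul_sum]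
  -- RHS term 2 : θ + Φ²
  have hθΦ : θ + Φ * Φ = ∑ i : Fin 5, ε' i • (T' i * T' i) := by
    rw [hθ]
    have hθc : (∑ μ, ∑ ν, (if μ = ν then e μ else 0) • (dop μ * dop ν))
        = ∑ μ, e μ • (dop μ * dop μ) := by
      refine Finset.sum_congr rfl fun μ _ => ?_
      rw [Finset.sum_eq_single μ]
      · rw [if_pos rfl]
      · intro ν _ hν; rw [if_neg (Ne.symm hν), zero_smul]
      · simp
    rw [hθc, Fin.sum_univ_castSucc (f := fun i : Fin 5 => ε' i • (T' i * T' i))]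
    simp only [hTc, hTl, hec, hel, one_smul]
  have hRT : LinearMap.trace ℂ (Matrix (Fin m) (Fin m) ℂ) ((θ + Φ * Φ) * (θ + Φ * Φ))
      = ∑ a, ∑ b, ε' a * ε' b * LinearMap.trace ℂ (Matrix (Fin m) (Fin m) ℂ) (T' a * T' a * T' b * T' b) := by
    rw [hθΦ, Finset.sum_mul_sum, map_sum]
    refine Finset.sum_congr rfl fun a _ => ?_
    rw [map_sum]
    refine Finset.sum_congr rfl fun b _ => ?_
    rw [smul_mul_assoc, mul_smul_comm, _root_.map_smul, _root_.map_smul]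
    rw [show T' a * T' a * T' b * T' b = (T' a * T' a) * (T' b * T' b) from by noncomm_ring]
    simp [smul_eq_mul]; ring
  -- final assembly
  rw [hmaster, hRF, hRT, hRC, hS2, hS, hW]
  ring
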